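/- If the SWAP test on a density matrix ρ on H ⊗ H rejects with probability α (i.e., accepts with probability 1 - α), then the trace distance between the two reduced states of ρ satisfies dist(Tr_2(ρ), Tr_1(ρ)) ≤ 3√α. -/

import Mathlib

open Finset
open scoped ComplexOrder

noncomputable section

/-- The swap matrix on `H ⊗ H`. -/
def swapMatrix (ι : Type*) [Fintype ι] [DecidableEq ι] : Matrix (ι × ι) (ι × ι) ℂ :=
  Matrix.of fun p q => if p.1 = q.2 ∧ p.2 = q.1 then 1 else 0

/-- Partial trace over the first tensor factor. -/
def ptraceFst {ι κ : Type*} [Fintype ι] (M : Matrix (ι × κ) (ι × κ) ℂ) : Matrix κ κ ℂ :=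
  Matrix.of fun j j' => ∑ i, M (i, j) (i, j')

/-- Partial trace over the second tensor factor. -/
def ptraceSnd {ι κ : Type*} [Fintype κ] (M : Matrix (ι × κ) (ι × κ) ℂ) : Matrix ι ι ℂ :=
  Matrix.of fun i i' => ∑ j, M (i, j) (i', j)

/-- The outer product `|ψ⟩⟨φ|`. -/
def outer {n : Type*} (ψ φ : n → ℂ) : Matrix n n ℂ :=
  Matrix.of fun p q => ψ p * star (φ q)

/-- The trace norm `‖A‖_tr = Tr √(AᴴA)`. -/
def traceNorm {n : Type*} [Fintype n] [DecidableEq n] (A : Matrix n n ℂ) : ℝ :=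
  (((Matrix.posSemidef_conjTranspose_mul_self A).1.eigenvectorUnitary.1 *
      Matrix.diagonal ((fun x : ℝ => (x : ℂ)) ∘ (Real.sqrt ·) ∘ (Matrix.posSemidef_conjTranspose_mul_self A).1.eigenvalues) *
      (star (Matrix.posSemidef_conjTranspose_mul_self A).1.eigenvectorUnitary : Matrix n n ℂ)).trace).re

/-- The trace distance between two states. -/
def traceDist {n : Type*} [Fintype n] [DecidableEq n] (ρ σ : Matrix n n ℂ) : ℝ :=
  (1 / 2) * traceNorm (ρ - σ)

open Matrix Kronecker
open scoped MatrixOrder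

section Auxiliary

set_option linter.unusedSectionVars false

variable {n : Type*} [Fintype n] [DecidableEq n]

private lemma aux_diag_re_nonneg {A : Matrix n n ℂ} (hA : A.PosSemidef) (i : n) :
    0 ≤ (A i i).re := by
  have h := hA.dotProduct_mulVec_nonneg (Pi.single i 1)
  have : star (Pi.single i 1 : n → ℂ) ⬝ᵥ A *ᵥ Pi.single i 1 = A i i := by
    simp [dotProduct, mulVec, Pi.single_apply]
  rw [this] at h
  exact (Complex.le_def.mp h).1

private lemma aux_trace_re_nonneg {A : Matrix n n ℂ} (hA : A.PosSemidef) : 0 ≤ A.trace.re := by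
  rw [Matrix.trace, Complex.re_sum]
  exact Finset.sum_nonneg fun i _ => aux_diag_re_nonneg hA i

private lemma aux_trace_mul_re_nonneg {A B : Matrix n n ℂ} (hA : A.PosSemidef)
    (hB : B.PosSemidef) : 0 ≤ ((A * B).trace).re := by
  obtain ⟨C, rfl⟩ : ∃ C : Matrix n n ℂ, B = Cᴴ * C := by
    obtain ⟨C, h⟩ := CStarAlgebra.nonneg_iff_eq_star_mul_self.mp hB.nonneg; exact ⟨C, h⟩
  have h : (A * (Cᴴ * C)).trace = (C * A * Cᴴ).trace := by
    rw [← Matrix.mul_assoc, Matrix.trace_mul_cycle]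
  rw [h]
  exact aux_trace_re_nonneg (hA.mul_mul_conjTranspose_same C)

private lemma aux_trace_sq_re (A : Matrix n n ℂ) :
    ((Aᴴ * A).trace).re = ∑ p : n × n, ‖A p.1 p.2‖ ^ 2 := by
  rw [Matrix.trace, Complex.re_sum, Fintype.sum_prod_type, Finset.sum_comm]
  congr 1 with j
  rw [Matrix.diag_apply, Matrix.mul_apply, Complex.re_sum]
  congr 1 with i
  rw [Matrix.conjTranspose_apply, Complex.mul_re, Complex.sq_norm,
    Complex.normSq_apply]
  simp [Complex.star_def]

private lemma aux_trace_cauchy_schwarz (A B : Matrix n n ℂ) :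
    ((Aᴴ * B).trace).re ≤ Real.sqrt ((Aᴴ * A).trace).re * Real.sqrt ((Bᴴ * B).trace).re := by
  classical
  let f : EuclideanSpace ℂ (n × n) := WithLp.toLp 2 (fun p : n × n => A p.1 p.2)
  let g : EuclideanSpace ℂ (n × n) := WithLp.toLp 2 (fun p : n × n => B p.1 p.2)
  have hinner : (Aᴴ * B).trace = inner (𝕜 := ℂ) f g := by
    simp only [f, g, Matrix.trace, Matrix.diag_apply, Matrix.mul_apply,
      Matrix.conjTranspose_apply, PiLp.inner_apply, RCLike.inner_apply, starRingEnd_apply,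
      Fintype.sum_prod_type_right]
    exact Finset.sum_congr rfl fun _ _ => Finset.sum_congr rfl fun _ _ => mul_comm _ _
  have hsn : ((Aᴴ * B).trace).re ≤ ‖f‖ * ‖g‖ := by
    rw [hinner]
    exact le_trans (Complex.re_le_norm _) (norm_inner_le_norm f g)
  have hfa : ‖f‖ = Real.sqrt ((Aᴴ * A).trace).re := by
    rw [EuclideanSpace.norm_eq, aux_trace_sq_re]
  have hgb : ‖g‖ = Real.sqrt ((Bᴴ * B).trace).re := by
    rw [EuclideanSpace.norm_eq, aux_trace_sq_re]
  rw [hfa, hgb] at hsn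
  exact hsn

private lemma aux_traceNorm_eq_sqrt (A : Matrix n n ℂ) :
    traceNorm A = ((CFC.sqrt (Aᴴ * A)).trace).re := by
  rw [traceNorm, CFC.sqrt_eq_real_sqrt (Aᴴ * A) (Matrix.posSemidef_conjTranspose_mul_self A).nonneg,
    cfcₙ_eq_cfc, (Matrix.posSemidef_conjTranspose_mul_self A).1.cfc_eq, Matrix.IsHermitian.cfc,
    Unitary.conjStarAlgAut_apply]
  rfl

private lemma aux_traceNorm_hermitian {A : Matrix n n ℂ} (hA : A.IsHermitian) :
    traceNorm A = ∑ i, |hA.eigenvalues i| := by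
  set U : Matrix n n ℂ := (hA.eigenvectorUnitary : Matrix n n ℂ) with hU
  have hUU : star U * U = 1 := Matrix.UnitaryGroup.star_mul_self _
  have key : ∀ (D E : Matrix n n ℂ),
      (U * D * star U) * (U * E * star U) = U * (D * E) * star U := by
    intro D E
    simp only [Matrix.mul_assoc]
    rw [← Matrix.mul_assoc (star U) U (E * star U), hUU, Matrix.one_mul]
  set D : Matrix n n ℂ := Matrix.diagonal (RCLike.ofReal ∘ hA.eigenvalues) with hD
  set D' : Matrix n n ℂ := Matrix.diagonal (fun i => Complex.ofReal |hA.eigenvalues i|) with hD'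
  set R : Matrix n n ℂ := U * D' * star U with hR
  have hRpsd : R.PosSemidef := by
    refine Matrix.PosSemidef.mul_mul_conjTranspose_same ?_ U
    refine Matrix.PosSemidef.diagonal fun i => ?_
    rw [Complex.le_def]
    simp [abs_nonneg]
  have hDD : D' * D' = D * D := by
    rw [hD, hD', Matrix.diagonal_mul_diagonal, Matrix.diagonal_mul_diagonal]
    refine congrArg Matrix.diagonal (funext fun i => ?_)
    simp only [Function.comp_apply, ← Complex.ofReal_mul, abs_mul_abs_self]
    push_cast
    rfl
  have hsq : R ^ 2 = Aᴴ * A := by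
    rw [hA.eq, pow_two, hR, key, hDD]
    conv_rhs => rw [hA.spectral_theorem, Unitary.conjStarAlgAut_apply, ← hU, ← hD, key]
  have hsqrt : CFC.sqrt (Aᴴ * A) = R :=
    CFC.sqrt_unique (by rw [← pow_two]; exact hsq) hRpsd.nonneg
  rw [aux_traceNorm_eq_sqrt, hsqrt, hR, Matrix.trace_mul_cycle, hUU, Matrix.one_mul, Matrix.trace_diagonal]
  rw [Complex.re_sum]
  simp

/-- Duality: for a traceless Hermitian matrix there is a "measurement" `M` achieving
half the trace norm. -/
private lemma aux_exists_dual {A : Matrix n n ℂ} (hA : A.IsHermitian) (h0 : A.trace = 0) :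
    ∃ M : Matrix n n ℂ, M.PosSemidef ∧ (1 - M).PosSemidef ∧ M * M = M ∧
      traceNorm A / 2 = ((M * A).trace).re := by
  set U : Matrix n n ℂ := (hA.eigenvectorUnitary : Matrix n n ℂ) with hU
  have hUU : star U * U = 1 := Matrix.UnitaryGroup.star_mul_self _
  have hUU' : U * star U = 1 := Matrix.mem_unitaryGroup_iff.mp hA.eigenvectorUnitary.2
  have key : ∀ (D E : Matrix n n ℂ),
      (U * D * star U) * (U * E * star U) = U * (D * E) * star U := by
    intro D E
    simp only [Matrix.mul_assoc]
    rw [← Matrix.mul_assoc (star U) U (E * star U), hUU, Matrix.one_mul]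
  have keytr : ∀ (D : Matrix n n ℂ), (U * D * star U).trace = D.trace := by
    intro D
    rw [Matrix.trace_mul_cycle, hUU, Matrix.one_mul]
  set d := hA.eigenvalues with hd
  set E : Matrix n n ℂ := Matrix.diagonal (fun i => if 0 < d i then (1:ℂ) else 0) with hE
  set M : Matrix n n ℂ := U * E * star U with hM
  have hsum : ∑ i, d i = 0 := by
    have hAtr : A.trace = ∑ i, (d i : ℂ) := by
      conv_lhs => rw [hA.spectral_theorem, Unitary.conjStarAlgAut_apply, ← hU]
      rw [keytr, Matrix.trace_diagonal]
      simp
      rfl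
    have h1 : (∑ i, (d i : ℂ)) = 0 := by rw [← hAtr, h0]
    exact_mod_cast h1
  refine ⟨M, ?_, ?_, ?_, ?_⟩
  · refine Matrix.PosSemidef.mul_mul_conjTranspose_same ?_ U
    refine Matrix.PosSemidef.diagonal fun i => ?_
    split <;> simp
  · have h1M : 1 - M = U * (1 - E) * star U := by
      rw [Matrix.mul_sub, Matrix.sub_mul, Matrix.mul_one, hUU']
    rw [h1M]
    refine Matrix.PosSemidef.mul_mul_conjTranspose_same ?_ U
    have h1E : (1 : Matrix n n ℂ) - E = Matrix.diagonal (fun i => 1 - if 0 < d i then (1:ℂ) else 0) := by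
      rw [hE, ← Matrix.diagonal_one, Matrix.diagonal_sub]
    rw [h1E]
    refine Matrix.PosSemidef.diagonal fun i => ?_
    split <;> simp
  · rw [hM, key]
    congr 1
    congr 1
    rw [hE, Matrix.diagonal_mul_diagonal]
    refine congrArg Matrix.diagonal (funext fun i => ?_)
    split <;> simp
  · have hMA : (M * A).trace = (E * Matrix.diagonal (RCLike.ofReal ∘ d)).trace := by
      conv_lhs => rw [hA.spectral_theorem, Unitary.conjStarAlgAut_apply, ← hU, hM, key, keytr]
    rw [hMA, hE, Matrix.diagonal_mul_diagonal, Matrix.trace_diagonal]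
    rw [Complex.re_sum]
    have hre : ∀ i, ((if 0 < d i then (1:ℂ) else 0) * (RCLike.ofReal ∘ d) i).re
        = if 0 < d i then d i else 0 := by
      intro i
      split <;> simp [Function.comp]
    rw [Finset.sum_congr rfl fun i _ => hre i]
    rw [aux_traceNorm_hermitian hA, ← hd]
    have h2 : ∑ i, |d i| = 2 * ∑ i, (if 0 < d i then d i else 0) := by
      calc ∑ i, |d i| = ∑ i, (2 * (if 0 < d i then d i else 0) - d i) := by
            refine Finset.sum_congr rfl fun i _ => ?_
            rcases lt_trichotomy 0 (d i) with h | h | h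
            · rw [if_pos h, abs_of_pos h]; ring
            · rw [if_neg (by rw [← h]; exact lt_irrefl 0), ← h]; simp
            · rw [if_neg (not_lt.mpr h.le), abs_of_neg h]; ring
        _ = 2 * (∑ i, if 0 < d i then d i else 0) - ∑ i, d i := by
            rw [Finset.sum_sub_distrib, Finset.mul_sum]
        _ = 2 * ∑ i, (if 0 < d i then d i else 0) := by rw [hsum]; ring
    rw [h2]
    ring

end Auxiliary

section Swap

set_option linter.unusedSectionVars false

variable {ι : Type*} [Fintype ι] [DecidableEq ι]

private lemma aux_swap_hermitian : (swapMatrix ι).IsHermitian := by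
  ext p q
  simp only [swapMatrix, Matrix.conjTranspose_apply, Matrix.of_apply]
  by_cases h : q.1 = p.2 ∧ q.2 = p.1
  · rw [if_pos h, if_pos ⟨h.2.symm, h.1.symm⟩]; simp
  · rw [if_neg h, if_neg (fun h' => h ⟨h'.2.symm, h'.1.symm⟩)]; simp

private lemma aux_swap_mul_apply (X : Matrix (ι × ι) (ι × ι) ℂ) (p q : ι × ι) :
    (swapMatrix ι * X) p q = X (p.2, p.1) q := by
  rw [Matrix.mul_apply, Fintype.sum_prod_type]
  simp [swapMatrix, ite_and]

private lemma aux_mul_swap_apply (X : Matrix (ι × ι) (ι × ι) ℂ) (p q : ι × ι) :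
    (X * swapMatrix ι) p q = X p (q.2, q.1) := by
  rw [Matrix.mul_apply, Fintype.sum_prod_type]
  simp [swapMatrix, ite_and]

private lemma aux_swap_mul_swap : swapMatrix ι * swapMatrix ι = 1 := by
  ext p q
  rw [aux_swap_mul_apply]
  simp only [swapMatrix, Matrix.of_apply, Matrix.one_apply]
  by_cases h : p = q
  · subst h; simp
  · rw [if_neg h, if_neg]
    intro ⟨h1, h2⟩
    exact h (Prod.ext h2 h1)

private lemma aux_ptraceSnd_conj_swap (X : Matrix (ι × ι) (ι × ι) ℂ) :
    ptraceSnd (swapMatrix ι * X * swapMatrix ι) = ptraceFst X := by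
  ext i i'
  simp only [ptraceSnd, ptraceFst, Matrix.of_apply]
  refine Finset.sum_congr rfl fun j _ => ?_
  rw [aux_mul_swap_apply, aux_swap_mul_apply]

private lemma aux_kron_conjTranspose (A B : Matrix ι ι ℂ) : (A ⊗ₖ B)ᴴ = Aᴴ ⊗ₖ Bᴴ := by
  ext p q
  simp [Matrix.conjTranspose_apply, Matrix.kroneckerMap_apply, star_mul']

private lemma aux_kron_sub (A B C : Matrix ι ι ℂ) :
    A ⊗ₖ (B - C) = A ⊗ₖ B - A ⊗ₖ C := by
  ext p q
  simp [Matrix.kroneckerMap_apply, mul_sub]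

private lemma aux_sub_kron (A B C : Matrix ι ι ℂ) :
    (A - B) ⊗ₖ C = A ⊗ₖ C - B ⊗ₖ C := by
  ext p q
  simp [Matrix.kroneckerMap_apply, sub_mul]

private lemma aux_kron_psd {A B : Matrix ι ι ℂ} (hA : A.PosSemidef) (hB : B.PosSemidef) :
    (A ⊗ₖ B).PosSemidef := by
  obtain ⟨C, rfl⟩ : ∃ C : Matrix ι ι ℂ, A = Cᴴ * C := by
    obtain ⟨C, h⟩ := CStarAlgebra.nonneg_iff_eq_star_mul_self.mp hA.nonneg; exact ⟨C, h⟩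
  obtain ⟨D, rfl⟩ : ∃ D : Matrix ι ι ℂ, B = Dᴴ * D := by
    obtain ⟨D, h⟩ := CStarAlgebra.nonneg_iff_eq_star_mul_self.mp hB.nonneg; exact ⟨D, h⟩
  rw [Matrix.mul_kronecker_mul, ← aux_kron_conjTranspose]
  exact Matrix.posSemidef_conjTranspose_mul_self _

private lemma aux_trace_mul_ptraceSnd (M : Matrix ι ι ℂ) (X : Matrix (ι × ι) (ι × ι) ℂ) :
    (M * ptraceSnd X).trace = ((M ⊗ₖ (1 : Matrix ι ι ℂ)) * X).trace := by
  trans ∑ i, ∑ j, ∑ i', M i i' * X (i', j) (i, j)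
  · simp only [Matrix.trace, Matrix.diag_apply, Matrix.mul_apply, ptraceSnd, Matrix.of_apply,
      Finset.mul_sum]
    exact Finset.sum_congr rfl fun i _ => Finset.sum_comm
  · simp only [Matrix.trace, Matrix.diag_apply, Matrix.mul_apply, Matrix.kroneckerMap_apply,
      Matrix.one_apply, Fintype.sum_prod_type, ite_mul, mul_ite, mul_one, mul_zero, zero_mul,
      Finset.sum_ite_eq, Finset.mem_univ, if_true]

private lemma aux_trace_mul_ptraceFst (M : Matrix ι ι ℂ) (X : Matrix (ι × ι) (ι × ι) ℂ) :
    (M * ptraceFst X).trace = (((1 : Matrix ι ι ℂ) ⊗ₖ M) * X).trace := by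
  trans ∑ j, ∑ i, ∑ j', M j j' * X (i, j') (i, j)
  · simp only [Matrix.trace, Matrix.diag_apply, Matrix.mul_apply, ptraceFst, Matrix.of_apply,
      Finset.mul_sum]
    exact Finset.sum_congr rfl fun j _ => Finset.sum_comm
  · simp only [Matrix.trace, Matrix.diag_apply, Matrix.mul_apply, Matrix.kroneckerMap_apply,
      Matrix.one_apply, Fintype.sum_prod_type, ite_mul, mul_ite, mul_one, mul_zero, zero_mul,
      one_mul]
    rw [Finset.sum_comm]
    refine Finset.sum_congr rfl fun i _ => Finset.sum_congr rfl fun j _ => ?_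
    rw [Finset.sum_comm]
    simp [Finset.sum_ite_eq]

private lemma aux_ptraceSnd_herm {X : Matrix (ι × ι) (ι × ι) ℂ} (hX : X.IsHermitian) :
    (ptraceSnd X).IsHermitian := by
  ext i i'
  simp only [ptraceSnd, Matrix.conjTranspose_apply, Matrix.of_apply, star_sum]
  refine Finset.sum_congr rfl fun j _ => ?_
  rw [← Matrix.conjTranspose_apply, hX.eq]

private lemma aux_ptraceFst_herm {X : Matrix (ι × ι) (ι × ι) ℂ} (hX : X.IsHermitian) :
    (ptraceFst X).IsHermitian := by
  ext j j'
  simp only [ptraceFst, Matrix.conjTranspose_apply, Matrix.of_apply, star_sum]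
  refine Finset.sum_congr rfl fun i _ => ?_
  rw [← Matrix.conjTranspose_apply, hX.eq]

private lemma aux_trace_ptraceSnd (X : Matrix (ι × ι) (ι × ι) ℂ) :
    (ptraceSnd X).trace = X.trace := by
  simp [Matrix.trace, ptraceSnd, Matrix.diag, Fintype.sum_prod_type]

private lemma aux_trace_ptraceFst (X : Matrix (ι × ι) (ι × ι) ℂ) :
    (ptraceFst X).trace = X.trace := by
  simp only [Matrix.trace, ptraceFst, Matrix.diag_apply, Matrix.of_apply,
    Fintype.sum_prod_type]
  exact Finset.sum_comm

end Swap

/-- If the SWAP test on a density matrix `ρ` rejects with probability `α`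
(accepts with probability `1 - α`), then the trace distance between the two
reduced states of `ρ` is at most `3√α`. -/
theorem stmt_13 {ι : Type*} [Fintype ι] [DecidableEq ι]
    (ρ : Matrix (ι × ι) (ι × ι) ℂ) (hρ : ρ.PosSemidef) (htr : ρ.trace = 1)
    (α : ℝ) (hα0 : 0 ≤ α) (hα1 : α ≤ 1)
    (hacc : ((((2 : ℂ)⁻¹ • (1 + swapMatrix ι)) * ρ).trace).re = 1 - α) :
    traceDist (ptraceSnd ρ) (ptraceFst ρ) ≤ 3 * Real.sqrt α := by
  classical
  set S : Matrix (ι × ι) (ι × ι) ℂ := swapMatrix ι with hSdef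
  have hSherm : Sᴴ = S := aux_swap_hermitian
  have hSS : S * S = 1 := aux_swap_mul_swap
  set P : Matrix (ι × ι) (ι × ι) ℂ := (2:ℂ)⁻¹ • (1 + S) with hPdef
  set Q : Matrix (ι × ι) (ι × ι) ℂ := (2:ℂ)⁻¹ • (1 - S) with hQdef
  have hsmulmul : ∀ (a b : ℂ) (X Y : Matrix (ι × ι) (ι × ι) ℂ),
      (a • X) * (b • Y) = (a * b) • (X * Y) := by
    intro a b X Y
    rw [Matrix.smul_mul, Matrix.mul_smul, smul_smul]
  have hc : ((2:ℂ)⁻¹ * (2:ℂ)⁻¹) * 2 = (2:ℂ)⁻¹ := by norm_num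
  have hPQ1 : P + Q = 1 := by
    rw [hPdef, hQdef, ← smul_add]
    have h2 : ((1 : Matrix (ι × ι) (ι × ι) ℂ) + S) + (1 - S) = (2:ℂ) • 1 := by
      rw [two_smul]; abel
    rw [h2, smul_smul]
    norm_num
  have hQ1P : Q = 1 - P := by rw [← hPQ1]; abel
  have hPP : P * P = P := by
    have h1S : ((1 : Matrix (ι × ι) (ι × ι) ℂ) + S) * (1 + S) = (2:ℂ) • (1 + S) := by
      rw [mul_add, mul_one, add_mul, one_mul, hSS, two_smul]; abel
    rw [hPdef, hsmulmul, h1S, smul_smul, hc]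
  have hQQ : Q * Q = Q := by
    have h1S : ((1 : Matrix (ι × ι) (ι × ι) ℂ) - S) * (1 - S) = (2:ℂ) • (1 - S) := by
      rw [mul_sub, mul_one, sub_mul, one_mul, hSS, two_smul]; abel
    rw [hQdef, hsmulmul, h1S, smul_smul, hc]
  have hPherm : Pᴴ = P := by
    rw [hPdef, Matrix.conjTranspose_smul, Matrix.conjTranspose_add, Matrix.conjTranspose_one,
      hSherm]
    norm_num
  have hQherm : Qᴴ = Q := by
    rw [hQdef, Matrix.conjTranspose_smul, Matrix.conjTranspose_sub, Matrix.conjTranspose_one,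
      hSherm]
    norm_num
  have hSP : S * P = P := by
    rw [hPdef, Matrix.mul_smul, mul_add, mul_one, hSS]
    rw [add_comm]
  have hPS : P * S = P := by
    rw [hPdef, Matrix.smul_mul, add_mul, one_mul, hSS]
    rw [add_comm]
  -- traces of P ρ and Q ρ
  have htrρ : ρ.trace.re = 1 := by rw [htr]; rfl
  have htrP : ((P * ρ).trace).re = 1 - α := hacc
  have htrQ : ((Q * ρ).trace).re = α := by
    rw [hQ1P, Matrix.sub_mul, Matrix.one_mul, Matrix.trace_sub, Complex.sub_re, htrρ, htrP]
    ring
  -- the difference of reduced states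
  set Δ : Matrix ι ι ℂ := ptraceSnd ρ - ptraceFst ρ with hΔdef
  have hΔherm : Δ.IsHermitian := (aux_ptraceSnd_herm hρ.1).sub (aux_ptraceFst_herm hρ.1)
  have hΔtr : Δ.trace = 0 := by
    rw [hΔdef, Matrix.trace_sub, aux_trace_ptraceSnd, aux_trace_ptraceFst, sub_self]
  obtain ⟨M, hMpsd, h1Mpsd, hMM, hdual⟩ := aux_exists_dual hΔherm hΔtr
  have hMherm : Mᴴ = M := hMpsd.1
  -- square root of ρ
  set T : Matrix (ι × ι) (ι × ι) ℂ := CFC.sqrt ρ with hTdef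
  have hT2 : T * T = ρ := CFC.sqrt_mul_sqrt_self ρ hρ.nonneg
  have hTherm : Tᴴ = T := (CFC.sqrt_nonneg ρ).posSemidef.1
  -- the symmetrized state
  set σ : Matrix (ι × ι) (ι × ι) ℂ := P * ρ * P with hσdef
  have hσswap : ptraceSnd σ = ptraceFst σ := by
    have hSσS : S * σ * S = σ := by
      have h : S * (P * ρ * P) * S = (S * P) * ρ * (P * S) := by
        simp only [Matrix.mul_assoc]
      rw [hσdef, h, hSP, hPS]
    calc ptraceSnd σ = ptraceSnd (S * σ * S) := by rw [hSσS]
      _ = ptraceFst σ := aux_ptraceSnd_conj_swap σ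
  set N : Matrix (ι × ι) (ι × ι) ℂ := M ⊗ₖ (1 : Matrix ι ι ℂ) - (1 : Matrix ι ι ℂ) ⊗ₖ M
    with hNdef
  have hNherm : Nᴴ = N := by
    rw [hNdef, Matrix.conjTranspose_sub, aux_kron_conjTranspose, aux_kron_conjTranspose,
      Matrix.conjTranspose_one, hMherm]
  have hkey : (M * Δ).trace = (N * (ρ - σ)).trace := by
    have h2 : ((M ⊗ₖ (1 : Matrix ι ι ℂ)) * σ).trace = (((1 : Matrix ι ι ℂ) ⊗ₖ M) * σ).trace := by
      rw [← aux_trace_mul_ptraceSnd, ← aux_trace_mul_ptraceFst, hσswap]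
    rw [hΔdef, Matrix.mul_sub, Matrix.trace_sub, aux_trace_mul_ptraceSnd,
      aux_trace_mul_ptraceFst, hNdef, Matrix.sub_mul, Matrix.trace_sub, Matrix.mul_sub,
      Matrix.mul_sub, Matrix.trace_sub, Matrix.trace_sub]
    rw [← h2]
    ring
  have hdecomp : ρ - σ = P * ρ * Q + Q * ρ * P + Q * ρ * Q := by
    have hρeq : ρ = (P + Q) * ρ * (P + Q) := by rw [hPQ1, Matrix.one_mul, Matrix.mul_one]
    calc ρ - σ = (P + Q) * ρ * (P + Q) - P * ρ * P := by rw [← hρeq, hσdef]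
      _ = P * ρ * Q + Q * ρ * P + Q * ρ * Q := by
          rw [Matrix.add_mul, Matrix.mul_add, Matrix.add_mul, Matrix.add_mul]
          abel
  set A : ℂ := (N * (P * ρ * Q)).trace with hAdef
  set B : ℂ := (N * (Q * ρ * P)).trace with hBdef
  set C : ℂ := (N * (Q * ρ * Q)).trace with hCdef
  have hsplit : (N * (ρ - σ)).trace = A + B + C := by
    rw [hdecomp, Matrix.mul_add, Matrix.mul_add, Matrix.trace_add, Matrix.trace_add]
  -- B has the same real part as A
  have hBA : B.re = A.re := by
    have hconj : (N * (P * ρ * Q))ᴴ = Q * ρ * P * N := by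
      simp only [Matrix.conjTranspose_mul, Matrix.mul_assoc, hNherm, hPherm, hQherm, hρ.1.eq]
    have hBtr : B = star A := by
      calc B = ((Q * ρ * P) * N).trace := Matrix.trace_mul_comm _ _
        _ = ((N * (P * ρ * Q))ᴴ).trace := by rw [hconj, Matrix.mul_assoc, Matrix.mul_assoc]
        _ = star A := Matrix.trace_conjTranspose _
    rw [hBtr, Complex.star_def]
    exact Complex.conj_re A
  -- bound on C
  have hCC : C = ((Q * N * Q) * ρ).trace := by
    calc C = ((Q * ρ * Q) * N).trace := Matrix.trace_mul_comm _ _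
      _ = ((Q * ρ) * (Q * N)).trace := by rw [Matrix.mul_assoc]
      _ = ((Q * N) * (Q * ρ)).trace := Matrix.trace_mul_comm _ _
      _ = ((Q * N * Q) * ρ).trace := by simp only [Matrix.mul_assoc]
  have h1Npsd : ((1 : Matrix (ι × ι) (ι × ι) ℂ) - N).PosSemidef := by
    have h : (1 : Matrix (ι × ι) (ι × ι) ℂ) - N
        = (((1:Matrix ι ι ℂ) - M) ⊗ₖ (1 : Matrix ι ι ℂ)) + ((1 : Matrix ι ι ℂ) ⊗ₖ M) := by
      rw [hNdef, aux_sub_kron, Matrix.one_kronecker_one]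
      abel
    rw [h]
    exact (aux_kron_psd h1Mpsd Matrix.PosSemidef.one).add
      (aux_kron_psd Matrix.PosSemidef.one hMpsd)
  have hCre : C.re ≤ α := by
    have hQ1NQ : (Q * (1 - N) * Q).PosSemidef := by
      have := h1Npsd.mul_mul_conjTranspose_same Q
      rwa [hQherm] at this
    have h0 : 0 ≤ (((Q * (1 - N) * Q) * ρ).trace).re := aux_trace_mul_re_nonneg hQ1NQ hρ
    have hexp : (Q * (1 - N) * Q) * ρ = Q * ρ - (Q * N * Q) * ρ := by
      rw [Matrix.mul_sub, Matrix.mul_one, Matrix.sub_mul, Matrix.sub_mul, hQQ]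
    rw [hexp, Matrix.trace_sub, Complex.sub_re, htrQ] at h0
    rw [hCC]
    linarith
  -- bound on A via Cauchy-Schwarz
  have hA_CS : A.re ≤ Real.sqrt (((Q * T)ᴴ * (Q * T)).trace).re
      * Real.sqrt (((N * (P * T))ᴴ * (N * (P * T))).trace).re := by
    have hA_eq : A = ((Q * T)ᴴ * (N * (P * T))).trace := by
      have h5 : (P * T) * (T * Q) = P * ρ * Q := by
        rw [← Matrix.mul_assoc, Matrix.mul_assoc P T T, hT2]
      have h6 : (N * (P * T)) * (T * Q) = N * (P * ρ * Q) := by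
        rw [Matrix.mul_assoc, h5]
      calc A = ((N * (P * T)) * (T * Q)).trace := by rw [h6]
        _ = ((T * Q) * (N * (P * T))).trace := Matrix.trace_mul_comm _ _
        _ = ((Q * T)ᴴ * (N * (P * T))).trace := by
            rw [Matrix.conjTranspose_mul, hTherm, hQherm]
    rw [hA_eq]
    exact aux_trace_cauchy_schwarz _ _
  have hQT : (((Q * T)ᴴ * (Q * T)).trace).re = α := by
    rw [Matrix.conjTranspose_mul, hTherm, hQherm]
    have h1 : ((T * Q) * (Q * T)).trace = ((Q * T) * (T * Q)).trace :=
      Matrix.trace_mul_comm _ _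
    have h2 : (Q * T) * (T * Q) = Q * ρ * Q := by
      rw [← Matrix.mul_assoc, Matrix.mul_assoc Q T T, hT2]
    have h3 : (Q * ρ * Q).trace = ((Q * Q) * ρ).trace := by
      rw [Matrix.trace_mul_cycle]
    rw [h1, h2, h3, hQQ, htrQ]
  have hNPT : (((N * (P * T))ᴴ * (N * (P * T))).trace).re ≤ 1 - α := by
    have hconj : (N * (P * T))ᴴ = (T * P) * N := by
      rw [Matrix.conjTranspose_mul, Matrix.conjTranspose_mul, hNherm, hPherm, hTherm,
        Matrix.mul_assoc]
    have hX : ((T * P) * N) * (N * (P * T)) = T * (P * (N * N) * P) * T := by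
      simp only [Matrix.mul_assoc]
    have htrX : (((T * P) * N) * (N * (P * T))).trace
        = ((P * (N * N) * P) * ρ).trace := by
      rw [hX, Matrix.trace_mul_cycle, hT2, Matrix.trace_mul_comm]
    have hKpsd : ((1 : Matrix (ι × ι) (ι × ι) ℂ) - N * N).PosSemidef := by
      have h8 : (1 : Matrix (ι × ι) (ι × ι) ℂ) - N * N
          = (((1:Matrix ι ι ℂ) - M) ⊗ₖ ((1:Matrix ι ι ℂ) - M)) + (M ⊗ₖ M) := by
        rw [hNdef, Matrix.sub_mul, Matrix.mul_sub, Matrix.mul_sub,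
          ← Matrix.mul_kronecker_mul, ← Matrix.mul_kronecker_mul,
          ← Matrix.mul_kronecker_mul, ← Matrix.mul_kronecker_mul,
          hMM]
        simp only [Matrix.mul_one, Matrix.one_mul]
        rw [aux_sub_kron, aux_kron_sub, aux_kron_sub, Matrix.one_kronecker_one]
        abel
      rw [h8]
      exact (aux_kron_psd (h1Mpsd) (h1Mpsd)).add (aux_kron_psd hMpsd hMpsd)
    have hPKP : (P * ((1 : Matrix (ι × ι) (ι × ι) ℂ) - N * N) * P).PosSemidef := by
      have := hKpsd.mul_mul_conjTranspose_same P
      rwa [hPherm] at this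
    have h0 : 0 ≤ (((P * (1 - N * N) * P) * ρ).trace).re := aux_trace_mul_re_nonneg hPKP hρ
    have hexp : (P * ((1 : Matrix (ι × ι) (ι × ι) ℂ) - N * N) * P) * ρ
        = (P * P) * ρ - (P * (N * N) * P) * ρ := by
      rw [Matrix.mul_sub, Matrix.mul_one, Matrix.sub_mul, Matrix.sub_mul]
    have htrPP : (((P * P) * ρ).trace).re = 1 - α := by rw [hPP, htrP]
    rw [hexp, Matrix.trace_sub, Complex.sub_re, htrPP] at h0
    rw [hconj, htrX]
    linarith
  -- put everything together
  have hsqrtα : Real.sqrt α * Real.sqrt α = α := Real.mul_self_sqrt hα0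
  have hsqrtα1 : Real.sqrt α ≤ 1 := Real.sqrt_le_one.2 hα1
  have hsqrt_nonneg : 0 ≤ Real.sqrt α := Real.sqrt_nonneg α
  have hαsqrt : α ≤ Real.sqrt α := by nlinarith
  have hA_le : A.re ≤ Real.sqrt α := by
    have h1 : Real.sqrt (((N * (P * T))ᴴ * (N * (P * T))).trace).re ≤ 1 := by
      apply Real.sqrt_le_one.2
      linarith
    have h2 : Real.sqrt (((Q * T)ᴴ * (Q * T)).trace).re = Real.sqrt α := by rw [hQT]
    calc A.re ≤ Real.sqrt (((Q * T)ᴴ * (Q * T)).trace).re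
          * Real.sqrt (((N * (P * T))ᴴ * (N * (P * T))).trace).re := hA_CS
      _ ≤ Real.sqrt α * 1 := by
          rw [h2]
          exact mul_le_mul_of_nonneg_left h1 hsqrt_nonneg
      _ = Real.sqrt α := mul_one _
  have hfinal : ((M * Δ).trace).re ≤ 3 * Real.sqrt α := by
    rw [hkey, hsplit, Complex.add_re, Complex.add_re, hBA]
    linarith
  have hTD : traceDist (ptraceSnd ρ) (ptraceFst ρ) = ((M * Δ).trace).re := by
    rw [traceDist, ← hΔdef, ← hdual]
    ring
  rw [hTD]
  exact hfinal

end
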